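/- Bound on gap depth (Lemma 3 analogue): Let β > 1 with |S'| ≥ β, and suppose F : T → L is a C¹ map on an m-block T of C_S with nonlinearity N(F) < 1/2, such that F maps some gap J_i(m+p) ⊆ T of level m+p onto a level-0 gap J_j, and suppose the nonlinearity N(S^m|_T) < 1/2. Then β^p ≤ e·max_r |J_r| / min_r |J_r|; in particular p is bounded by a constant l depending only on β and the lengths |J₁|,…,|J_{k−1}|. -/

import Mathlib

open MeasureTheory

lemma hasDerivAt_iterate' (S S' : ℝ → ℝ) (D : Set ℝ)
    (hS : ∀ x ∈ D, HasDerivAt S (S' x) x) :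
    ∀ (n : ℕ) (x : ℝ), (∀ q < n, S^[q] x ∈ D) →
      HasDerivAt S^[n] (∏ q ∈ Finset.range n, S' (S^[q] x)) x := by
  intro n
  induction n with
  | zero => intro x _; simpa using hasDerivAt_id x
  | succ n ih =>
    intro x hx
    have ihx := ih x (fun q hq => hx q (hq.trans (Nat.lt_succ_self n)))
    have h1 : HasDerivAt S (S' (S^[n] x)) (S^[n] x) := hS _ (hx n (Nat.lt_succ_self n))
    have h2 := h1.comp x ihx
    rw [← Function.iterate_succ'] at h2
    rw [Finset.prod_range_succ]
    rw [mul_comm]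
    exact h2

lemma mvt_abs' (G G' : ℝ → ℝ) (t1 t2 : ℝ)
    (hderiv : ∀ z ∈ Set.Icc t1 t2, HasDerivAt G (G' z) z)
    (x y : ℝ) (hx : x ∈ Set.Icc t1 t2) (hy : y ∈ Set.Icc t1 t2) :
    ∃ ξ ∈ Set.Icc t1 t2, |G y - G x| = |G' ξ| * |y - x| := by
  have key : ∀ a b : ℝ, a < b → a ∈ Set.Icc t1 t2 → b ∈ Set.Icc t1 t2 →
      ∃ ξ ∈ Set.Icc t1 t2, |G b - G a| = |G' ξ| * |b - a| := by
    intro a b hab haI hbI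
    have hsub : Set.Icc a b ⊆ Set.Icc t1 t2 := Set.Icc_subset_Icc haI.1 hbI.2
    have hcont : ContinuousOn G (Set.Icc a b) := fun z hz =>
      (hderiv z (hsub hz)).continuousAt.continuousWithinAt
    have hd : ∀ z ∈ Set.Ioo a b, HasDerivAt G (G' z) z := fun z hz =>
      hderiv z (hsub (Set.mem_Icc_of_Ioo hz))
    obtain ⟨ξ, hξ, hslope⟩ := exists_hasDerivAt_eq_slope G G' hab hcont hd
    refine ⟨ξ, hsub (Set.mem_Icc_of_Ioo hξ), ?_⟩
    have : G b - G a = G' ξ * (b - a) :=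
      ((eq_div_iff (sub_ne_zero.mpr hab.ne')).mp hslope).symm
    rw [this, abs_mul]
  rcases lt_trichotomy x y with h | h | h
  · exact key x y h hx hy
  · subst h; exact ⟨x, hx, by simp⟩
  · obtain ⟨ξ, hξ, he⟩ := key y x h hy hx
    exact ⟨ξ, hξ, by rw [abs_sub_comm (G y), abs_sub_comm y]; exact he⟩

/-- Bound on gap depth (Lemma 3 analogue): with `|S'| ≥ β > 1`, if `F` is a `C¹` map on
an `m`-block `T` with nonlinearity `N(F) < 1/2` and `N(S^m|_T) < 1/2`, and `F` maps a
gap of level `m+p` contained in `T` onto a level-0 gap, while the image under `F` of the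
level-`m` gap has length at most the largest level-0 gap, then
`β^p ≤ e * max_r |J_r| / min_r |J_r|`; in particular `p` is bounded. -/
theorem gap_depth_bound
    (k kg m p : ℕ) (c d : Fin k → ℝ) (u v : Fin kg → ℝ)
    (hne : (Finset.univ : Finset (Fin kg)).Nonempty)
    (hgap : ∀ r, u r < v r)
    (β t1 t2 a1 a2 b1 b2 w1 w2 : ℝ) (i j : Fin kg)
    (S S' F F' : ℝ → ℝ) (hβ : 1 < β)
    (hS : ∀ x ∈ ⋃ q, Set.Icc (c q) (d q), HasDerivAt S (S' x) x)
    (hexp : ∀ x ∈ ⋃ q, Set.Icc (c q) (d q), β ≤ |S' x|)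
    (hT : t1 < t2)
    (hTiter : ∀ q < m, S^[q] '' Set.Icc t1 t2 ⊆ ⋃ q, Set.Icc (c q) (d q))
    (hNSm : ∀ x ∈ Set.Icc t1 t2, ∀ y ∈ Set.Icc t1 t2,
      Real.log (|∏ q ∈ Finset.range m, S' (S^[q] x)| /
        |∏ q ∈ Finset.range m, S' (S^[q] y)|) < 1 / 2)
    (hF : ∀ x ∈ Set.Icc t1 t2, HasDerivAt F (F' x) x)
    (hF0 : ∀ x ∈ Set.Icc t1 t2, F' x ≠ 0)
    (hNF : ∀ x ∈ Set.Icc t1 t2, ∀ y ∈ Set.Icc t1 t2,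
      Real.log (|F' x| / |F' y|) < 1 / 2)
    -- the level-`m` gap `J_i(m) = [a1,a2] ⊆ T` with `S^m(J_i(m)) = J_i`
    (ha : a1 < a2) (haT : Set.Icc a1 a2 ⊆ Set.Icc t1 t2)
    (hGm : S^[m] '' Set.Icc a1 a2 = Set.Icc (u i) (v i))
    -- the level-`m+p` gap `J_i(m+p) = [b1,b2] ⊆ T` with `S^m(J_i(m+p)) = J_i(p) = [w1,w2]`
    (hb : b1 < b2) (hbT : Set.Icc b1 b2 ⊆ Set.Icc t1 t2)
    (hGmp : S^[m] '' Set.Icc b1 b2 = Set.Icc w1 w2)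
    (hGpiter : ∀ q < p, S^[q] '' Set.Icc w1 w2 ⊆ ⋃ q, Set.Icc (c q) (d q))
    (hGp : S^[p] '' Set.Icc w1 w2 = Set.Icc (u i) (v i))
    -- `F` maps the deep gap onto the level-0 gap `J_j`
    (hFGmp : F '' Set.Icc b1 b2 = Set.Icc (u j) (v j))
    -- `F` maps the level-`m` gap onto a complementary component, of length at most `max_r |J_r|`
    (hFGm : (volume (F '' Set.Icc a1 a2)).toReal ≤
      Finset.univ.sup' hne fun r => v r - u r) :
    β ^ p ≤ Real.exp 1 * (Finset.univ.sup' hne fun r => v r - u r) /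
      (Finset.univ.inf' hne fun r => v r - u r) := by
  set M := Finset.univ.sup' hne fun r => v r - u r with hMdef
  set μ := Finset.univ.inf' hne fun r => v r - u r with hμdef
  have hμpos : 0 < μ :=
    (Finset.lt_inf'_iff hne).mpr fun r _ => sub_pos.mpr (hgap r)
  have hβ0 : (0:ℝ) < β := lt_trans one_pos hβ
  -- derivative of the m-th iterate on T
  have hPmderiv : ∀ x ∈ Set.Icc t1 t2,
      HasDerivAt S^[m] (∏ q ∈ Finset.range m, S' (S^[q] x)) x := fun x hx =>
    hasDerivAt_iterate' S S' _ hS m x (fun q hq => hTiter q hq ⟨x, hx, rfl⟩)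
  have hPmpos : ∀ x ∈ Set.Icc t1 t2, 0 < |∏ q ∈ Finset.range m, S' (S^[q] x)| := by
    intro x hx
    rw [Finset.abs_prod]
    exact Finset.prod_pos fun q hq => lt_of_lt_of_le hβ0
      (hexp _ (hTiter q (Finset.mem_range.mp hq) ⟨x, hx, rfl⟩))
  -- w1 ≤ w2
  have hw : w1 ≤ w2 := Set.nonempty_Icc.mp (hGmp ▸ (Set.nonempty_Icc.mpr hb.le).image _)
  -- derivative of the p-th iterate on J_i(p)
  have hPpderiv : ∀ x ∈ Set.Icc w1 w2,
      HasDerivAt S^[p] (∏ q ∈ Finset.range p, S' (S^[q] x)) x := fun x hx =>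
    hasDerivAt_iterate' S S' _ hS p x (fun q hq => hGpiter q hq ⟨x, hx, rfl⟩)
  have hPpge : ∀ x ∈ Set.Icc w1 w2, β ^ p ≤ |∏ q ∈ Finset.range p, S' (S^[q] x)| := by
    intro x hx
    rw [Finset.abs_prod]
    calc β ^ p = ∏ _q ∈ Finset.range p, β := by rw [Finset.prod_const, Finset.card_range]
      _ ≤ _ := Finset.prod_le_prod (fun q _ => hβ0.le)
          (fun q hq => hexp _ (hGpiter q (Finset.mem_range.mp hq) ⟨x, hx, rfl⟩))
  -- Step 1: β^p (w2 - w1) ≤ v i - u i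
  obtain ⟨ξ0, hξ0, e1⟩ := mvt_abs' S^[p] (fun x => ∏ q ∈ Finset.range p, S' (S^[q] x))
    w1 w2 hPpderiv w1 w2 (Set.left_mem_Icc.mpr hw) (Set.right_mem_Icc.mpr hw)
  have hm1 : S^[p] w1 ∈ Set.Icc (u i) (v i) :=
    hGp ▸ Set.mem_image_of_mem _ (Set.left_mem_Icc.mpr hw)
  have hm2 : S^[p] w2 ∈ Set.Icc (u i) (v i) :=
    hGp ▸ Set.mem_image_of_mem _ (Set.right_mem_Icc.mpr hw)
  have c1 : β ^ p * (w2 - w1) ≤ v i - u i := by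
    have h1 : |S^[p] w2 - S^[p] w1| ≤ v i - u i := by
      rw [abs_sub_le_iff]
      constructor <;> linarith [hm1.1, hm1.2, hm2.1, hm2.2]
    have h2 : |w2 - w1| = w2 - w1 := abs_of_nonneg (by linarith)
    calc β ^ p * (w2 - w1) ≤ |∏ q ∈ Finset.range p, S' (S^[q] ξ0)| * (w2 - w1) :=
        mul_le_mul_of_nonneg_right (hPpge ξ0 hξ0) (by linarith)
      _ = |S^[p] w2 - S^[p] w1| := by rw [e1, h2]
      _ ≤ v i - u i := h1
  -- Step 2: |Pm ξ1| (b2 - b1) ≤ w2 - w1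
  obtain ⟨ξ1, hξ1, e2⟩ := mvt_abs' S^[m] (fun x => ∏ q ∈ Finset.range m, S' (S^[q] x))
    t1 t2 hPmderiv b1 b2 (hbT (Set.left_mem_Icc.mpr hb.le)) (hbT (Set.right_mem_Icc.mpr hb.le))
  have hmb1 : S^[m] b1 ∈ Set.Icc w1 w2 :=
    hGmp ▸ Set.mem_image_of_mem _ (Set.left_mem_Icc.mpr hb.le)
  have hmb2 : S^[m] b2 ∈ Set.Icc w1 w2 :=
    hGmp ▸ Set.mem_image_of_mem _ (Set.right_mem_Icc.mpr hb.le)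
  have c2 : |∏ q ∈ Finset.range m, S' (S^[q] ξ1)| * (b2 - b1) ≤ w2 - w1 := by
    have h2 : |b2 - b1| = b2 - b1 := abs_of_nonneg (by linarith)
    rw [← h2]
    rw [show |∏ q ∈ Finset.range m, S' (S^[q] ξ1)| * |b2 - b1|
        = |S^[m] b2 - S^[m] b1| from e2.symm, abs_sub_le_iff]
    constructor <;> linarith [hmb1.1, hmb1.2, hmb2.1, hmb2.2]
  -- Step 3: v i - u i ≤ |Pm ξ2| (a2 - a1)
  have hui : u i ∈ S^[m] '' Set.Icc a1 a2 := by rw [hGm]; exact ⟨le_rfl, (hgap i).le⟩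
  have hvi : v i ∈ S^[m] '' Set.Icc a1 a2 := by rw [hGm]; exact ⟨(hgap i).le, le_rfl⟩
  obtain ⟨xu, hxu, hxueq⟩ := hui
  obtain ⟨xv, hxv, hxveq⟩ := hvi
  obtain ⟨ξ2, hξ2, e3⟩ := mvt_abs' S^[m] (fun x => ∏ q ∈ Finset.range m, S' (S^[q] x))
    t1 t2 hPmderiv xu xv (haT hxu) (haT hxv)
  have c3 : v i - u i ≤ |∏ q ∈ Finset.range m, S' (S^[q] ξ2)| * (a2 - a1) := by
    have h1 : v i - u i = |S^[m] xv - S^[m] xu| := by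
      rw [hxveq, hxueq, abs_of_nonneg (by linarith [hgap i])]
    have h2 : |xv - xu| ≤ a2 - a1 := by
      rw [abs_sub_le_iff]; constructor <;> linarith [hxu.1, hxu.2, hxv.1, hxv.2]
    rw [h1, e3]
    exact mul_le_mul_of_nonneg_left h2 (abs_nonneg _)
  -- Nonlinearity bound for S^m
  have hNexp : ∀ x ∈ Set.Icc t1 t2, ∀ y ∈ Set.Icc t1 t2,
      |∏ q ∈ Finset.range m, S' (S^[q] x)| ≤
        Real.exp (1/2) * |∏ q ∈ Finset.range m, S' (S^[q] y)| := by
    intro x hx y hy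
    have hpx := hPmpos x hx
    have hpy := hPmpos y hy
    have hr := div_pos hpx hpy
    have hq : |∏ q ∈ Finset.range m, S' (S^[q] x)| / |∏ q ∈ Finset.range m, S' (S^[q] y)|
        < Real.exp (1/2) := by
      calc _ = Real.exp (Real.log (|∏ q ∈ Finset.range m, S' (S^[q] x)| /
            |∏ q ∈ Finset.range m, S' (S^[q] y)|)) := (Real.exp_log hr).symm
        _ < Real.exp (1/2) := Real.exp_lt_exp.mpr (hNSm x hx y hy)
    exact ((div_lt_iff₀ hpy).mp hq).le
  -- Combine: β^p (b2 - b1) ≤ exp(1/2) (a2 - a1)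
  have cB : β ^ p * (b2 - b1) ≤ Real.exp (1/2) * (a2 - a1) := by
    have hp1 : 0 < |∏ q ∈ Finset.range m, S' (S^[q] ξ1)| := hPmpos ξ1 hξ1
    have hchain : β ^ p * (|∏ q ∈ Finset.range m, S' (S^[q] ξ1)| * (b2 - b1)) ≤
        Real.exp (1/2) * |∏ q ∈ Finset.range m, S' (S^[q] ξ1)| * (a2 - a1) := by
      calc β ^ p * (|∏ q ∈ Finset.range m, S' (S^[q] ξ1)| * (b2 - b1))
          ≤ β ^ p * (w2 - w1) := mul_le_mul_of_nonneg_left c2 (pow_nonneg hβ0.le p)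
        _ ≤ v i - u i := c1
        _ ≤ |∏ q ∈ Finset.range m, S' (S^[q] ξ2)| * (a2 - a1) := c3
        _ ≤ Real.exp (1/2) * |∏ q ∈ Finset.range m, S' (S^[q] ξ1)| * (a2 - a1) :=
            mul_le_mul_of_nonneg_right (hNexp ξ2 hξ2 ξ1 hξ1) (by linarith)
    nlinarith [hchain, hp1, pow_pos hβ0 p]
  -- F side
  have huj : u j ∈ F '' Set.Icc b1 b2 := by rw [hFGmp]; exact ⟨le_rfl, (hgap j).le⟩
  have hvj : v j ∈ F '' Set.Icc b1 b2 := by rw [hFGmp]; exact ⟨(hgap j).le, le_rfl⟩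
  obtain ⟨yu, hyu, hyueq⟩ := huj
  obtain ⟨yv, hyv, hyveq⟩ := hvj
  obtain ⟨η1, hη1, f1⟩ := mvt_abs' F F' t1 t2 hF yu yv (hbT hyu) (hbT hyv)
  have d1 : v j - u j ≤ |F' η1| * (b2 - b1) := by
    have h1 : v j - u j = |F yv - F yu| := by
      rw [hyveq, hyueq, abs_of_nonneg (by linarith [hgap j])]
    have h2 : |yv - yu| ≤ b2 - b1 := by
      rw [abs_sub_le_iff]; constructor <;> linarith [hyu.1, hyu.2, hyv.1, hyv.2]
    rw [h1, f1]
    exact mul_le_mul_of_nonneg_left h2 (abs_nonneg _)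
  obtain ⟨η2, hη2, f2⟩ := mvt_abs' F F' t1 t2 hF a1 a2
    (haT (Set.left_mem_Icc.mpr ha.le)) (haT (Set.right_mem_Icc.mpr ha.le))
  -- measure bound: |F' η2| (a2 - a1) ≤ M
  have hFcont : ContinuousOn F (Set.Icc a1 a2) := fun z hz =>
    (hF z (haT hz)).continuousAt.continuousWithinAt
  have hcomp : IsCompact (F '' Set.Icc a1 a2) := isCompact_Icc.image_of_continuousOn hFcont
  have hconn : (F '' Set.Icc a1 a2).OrdConnected :=
    (isPreconnected_Icc.image F hFcont).ordConnected
  have hFa1 : F a1 ∈ F '' Set.Icc a1 a2 := Set.mem_image_of_mem _ (Set.left_mem_Icc.mpr ha.le)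
  have hFa2 : F a2 ∈ F '' Set.Icc a1 a2 := Set.mem_image_of_mem _ (Set.right_mem_Icc.mpr ha.le)
  have hsubI : Set.Icc (min (F a1) (F a2)) (max (F a1) (F a2)) ⊆ F '' Set.Icc a1 a2 := by
    rcases le_total (F a1) (F a2) with h | h
    · rw [min_eq_left h, max_eq_right h]; exact hconn.out hFa1 hFa2
    · rw [min_eq_right h, max_eq_left h]; exact hconn.out hFa2 hFa1
  have d2 : |F a2 - F a1| ≤ (volume (F '' Set.Icc a1 a2)).toReal := by
    have h1 : ENNReal.ofReal (|F a2 - F a1|) ≤ volume (F '' Set.Icc a1 a2) := by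
      have hmono := measure_mono (μ := volume) hsubI
      rw [Real.volume_Icc, max_sub_min_eq_abs] at hmono
      exact hmono
    calc |F a2 - F a1| = (ENNReal.ofReal |F a2 - F a1|).toReal :=
        (ENNReal.toReal_ofReal (abs_nonneg _)).symm
      _ ≤ _ := ENNReal.toReal_mono hcomp.measure_lt_top.ne h1
  have d3 : |F' η2| * (a2 - a1) ≤ M := by
    calc |F' η2| * (a2 - a1) = |F' η2| * |a2 - a1| := by
          rw [abs_of_nonneg (show (0:ℝ) ≤ a2 - a1 by linarith)]
      _ = |F a2 - F a1| := f2.symm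
      _ ≤ (volume (F '' Set.Icc a1 a2)).toReal := d2
      _ ≤ M := hFGm
  have hF'pos : ∀ x ∈ Set.Icc t1 t2, 0 < |F' x| := fun x hx => abs_pos.mpr (hF0 x hx)
  have d4 : |F' η1| ≤ Real.exp (1/2) * |F' η2| := by
    have hr := div_pos (hF'pos η1 hη1) (hF'pos η2 hη2)
    have hq : |F' η1| / |F' η2| < Real.exp (1/2) := by
      calc _ = Real.exp (Real.log (|F' η1| / |F' η2|)) := (Real.exp_log hr).symm
        _ < Real.exp (1/2) := Real.exp_lt_exp.mpr (hNF η1 hη1 η2 hη2)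
    exact ((div_lt_iff₀ (hF'pos η2 hη2)).mp hq).le
  -- final combination
  have hβp : (0:ℝ) < β ^ p := pow_pos hβ0 p
  have hμM : β ^ p * μ ≤ Real.exp 1 * M := by
    have hμle : μ ≤ v j - u j := Finset.inf'_le _ (Finset.mem_univ j)
    calc β ^ p * μ ≤ β ^ p * (v j - u j) := mul_le_mul_of_nonneg_left hμle hβp.le
      _ ≤ β ^ p * (|F' η1| * (b2 - b1)) := mul_le_mul_of_nonneg_left d1 hβp.le
      _ = |F' η1| * (β ^ p * (b2 - b1)) := by ring
      _ ≤ |F' η1| * (Real.exp (1/2) * (a2 - a1)) :=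
          mul_le_mul_of_nonneg_left cB (abs_nonneg _)
      _ ≤ (Real.exp (1/2) * |F' η2|) * (Real.exp (1/2) * (a2 - a1)) :=
          mul_le_mul_of_nonneg_right d4
            (mul_nonneg (Real.exp_nonneg _) (by linarith))
      _ = Real.exp (1/2) * Real.exp (1/2) * (|F' η2| * (a2 - a1)) := by ring
      _ ≤ Real.exp (1/2) * Real.exp (1/2) * M :=
          mul_le_mul_of_nonneg_left d3
            (mul_nonneg (Real.exp_nonneg _) (Real.exp_nonneg _))
      _ = Real.exp 1 * M := by rw [← Real.exp_add]; norm_num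
  exact (le_div_iff₀ hμpos).mpr hμM
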